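/- Let q ≥ 2 be real, let s and t be reals with 0 ≤ s ≤ t, and let x ∈ ℝ. Then |x|^q ≤ γ_q(s,x) and γ_q(t,x) ≤ |x|^q + (q/2 − 1)t^q; consequently γ_q(t,x) − γ_q(s,x) ≤ (q/2 − 1)t^q. -/

import Mathlib

/-- The per-coordinate smoothed power function
`γ_q(t,x) = (q/2)t^{q−2}x²` if `|x| ≤ t`, and `|x|^q + (q/2 − 1)t^q` otherwise. -/
noncomputable def gam (q t x : ℝ) : ℝ :=
  if |x| ≤ t then q / 2 * t ^ (q - 2) * x ^ 2 else |x| ^ q + (q / 2 - 1) * t ^ q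

lemma abs_rpow_eq_sq (x : ℝ) : |x| ^ (2 : ℝ) = x ^ 2 := by
  rw [show (2:ℝ) = ((2:ℕ):ℝ) by norm_num, Real.rpow_natCast, sq_abs]

/-- Tangent-line inequality from convexity of `u ↦ u^{q/2}`. -/
lemma tangent {q t : ℝ} (hq : 2 ≤ q) (ht : 0 ≤ t) (x : ℝ) :
    q / 2 * t ^ (q - 2) * x ^ 2 ≤ |x| ^ q + (q / 2 - 1) * t ^ q := by
  have hx2 : (0:ℝ) ≤ x ^ 2 := sq_nonneg x
  have habs : (x ^ 2) ^ (q / 2) = |x| ^ q := by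
    rw [← abs_rpow_eq_sq, ← Real.rpow_mul (abs_nonneg x)]
    congr 1
    ring
  rcases eq_or_lt_of_le hq with hq2 | hq2
  · rw [← hq2]
    simp [abs_rpow_eq_sq x]
  · have hp : 1 < q / 2 := by linarith
    have hpq : (q / 2).HolderConjugate (q / 2 / (q / 2 - 1)) :=
      Real.HolderConjugate.conjExponent hp
    have hY := Real.young_inequality_of_nonneg hx2
      (Real.rpow_nonneg ht (q - 2)) hpq
    have h1 : (t ^ (q - 2)) ^ (q / 2 / (q / 2 - 1)) = t ^ q := by
      rw [← Real.rpow_mul ht]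
      congr 1
      have hne : q - 2 ≠ 0 := by linarith
      field_simp
      try ring
    rw [habs, h1] at hY
    have hdiv : |x| ^ q / (q / 2) + t ^ q / (q / 2 / (q / 2 - 1))
        = (|x| ^ q + (q / 2 - 1) * t ^ q) / (q / 2) := by
      field_simp
    rw [hdiv] at hY
    calc q / 2 * t ^ (q - 2) * x ^ 2 = (x ^ 2 * t ^ (q - 2)) * (q / 2) := by ring
      _ ≤ ((|x| ^ q + (q / 2 - 1) * t ^ q) / (q / 2)) * (q / 2) :=
          mul_le_mul_of_nonneg_right hY (by linarith)
      _ = |x| ^ q + (q / 2 - 1) * t ^ q := by field_simp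

lemma lower {q s : ℝ} (hq : 2 ≤ q) (hs : 0 ≤ s) {x : ℝ} (hxs : |x| ≤ s) :
    |x| ^ q ≤ q / 2 * s ^ (q - 2) * x ^ 2 := by
  rcases eq_or_ne x 0 with rfl | hx
  · have : (0:ℝ) ^ q = 0 := Real.zero_rpow (by positivity)
    simp [this]
  · have hxpos : 0 < |x| := abs_pos.mpr hx
    have h1 : |x| ^ q = |x| ^ (q - 2) * x ^ 2 := by
      rw [← abs_rpow_eq_sq, ← Real.rpow_add hxpos]
      ring_nf
    rw [h1]
    have h2 : |x| ^ (q - 2) ≤ s ^ (q - 2) :=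
      Real.rpow_le_rpow (abs_nonneg x) hxs (by linarith)
    have h3 : |x| ^ (q - 2) * x ^ 2 ≤ s ^ (q - 2) * x ^ 2 :=
      mul_le_mul_of_nonneg_right h2 (sq_nonneg x)
    calc |x| ^ (q - 2) * x ^ 2 ≤ s ^ (q - 2) * x ^ 2 := h3
      _ ≤ q / 2 * (s ^ (q - 2) * x ^ 2) := le_mul_of_one_le_left (by positivity) (by linarith)
      _ = q / 2 * s ^ (q - 2) * x ^ 2 := by ring

/-- per-coordinate estimate in Lemma 5.2, Scaling. -/
theorem stmt_14 {q : ℝ} (hq : 2 ≤ q) {s t : ℝ} (hs : 0 ≤ s) (hst : s ≤ t) (x : ℝ) :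
    |x| ^ q ≤ gam q s x ∧ gam q t x ≤ |x| ^ q + (q / 2 - 1) * t ^ q ∧
      gam q t x - gam q s x ≤ (q / 2 - 1) * t ^ q := by
  have ht : 0 ≤ t := hs.trans hst
  have h1 : |x| ^ q ≤ gam q s x := by
    unfold gam
    split_ifs with h
    · exact lower hq hs h
    · have : 0 ≤ (q / 2 - 1) * s ^ q :=
        mul_nonneg (by linarith) (Real.rpow_nonneg hs q)
      linarith
  have h2 : gam q t x ≤ |x| ^ q + (q / 2 - 1) * t ^ q := by
    unfold gam
    split_ifs with h
    · exact tangent hq ht x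
    · exact le_refl _
  exact ⟨h1, h2, by linarith⟩
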